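/- Let φ(x) = τ xₙ + λ xₙ²/2 on ℝⁿ with τ, λ > 0. Define A g = Δg + |∇φ|² g and B g = -∇φ·∇g - ∇·(g ∇φ). Then the commutator satisfies [A,B] g(x) = -4λ ∂²_{xₙ} g(x) + 4λ(τ + λ xₙ)² g(x) for g ∈ 𝒮(ℝⁿ). -/

import Mathlib

open scoped BigOperators

noncomputable section

/-- The Carleman weight `φ(x) = τ xₙ + λ xₙ²/2`. -/
def phiW (n : ℕ) (τ lam : ℝ) (x : EuclideanSpace ℝ (Fin (n + 1))) : ℝ :=
  τ * x (Fin.last n) + lam * (x (Fin.last n)) ^ 2 / 2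

/-- The Laplacian as the sum of second partial derivatives along coordinates. -/
def lapl (n : ℕ) (u : EuclideanSpace ℝ (Fin (n + 1)) → ℂ)
    (x : EuclideanSpace ℝ (Fin (n + 1))) : ℂ :=
  ∑ i, fderiv ℝ (fun y => fderiv ℝ u y (EuclideanSpace.single i 1)) x
    (EuclideanSpace.single i 1)

/-- The formally self-adjoint part `A u = Δu + |∇φ|² u`. -/
def opA (n : ℕ) (τ lam : ℝ) (u : EuclideanSpace ℝ (Fin (n + 1)) → ℂ)
    (x : EuclideanSpace ℝ (Fin (n + 1))) : ℂ :=
  lapl n u x +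
    ((∑ i, (fderiv ℝ (phiW n τ lam) x (EuclideanSpace.single i 1)) ^ 2 : ℝ) : ℂ) * u x

/-- The formally skew-adjoint part `B u = -∇φ·∇u - ∇·(u ∇φ)`. -/
def opB (n : ℕ) (τ lam : ℝ) (u : EuclideanSpace ℝ (Fin (n + 1)) → ℂ)
    (x : EuclideanSpace ℝ (Fin (n + 1))) : ℂ :=
  -(∑ i, ((fderiv ℝ (phiW n τ lam) x (EuclideanSpace.single i 1) : ℝ) : ℂ) *
      fderiv ℝ u x (EuclideanSpace.single i 1)) -
  ∑ i, fderiv ℝ (fun y =>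
      ((fderiv ℝ (phiW n τ lam) y (EuclideanSpace.single i 1) : ℝ) : ℂ) * u y) x
    (EuclideanSpace.single i 1)

------------------------------------------------------------------------------
-- Auxiliary development
------------------------------------------------------------------------------

open scoped ContDiff

namespace Statement5Aux

abbrev EE (n : ℕ) := EuclideanSpace ℝ (Fin (n + 1))

/-- Directional derivative operator. -/
def Dv (n : ℕ) (v : EE n) (f : EE n → ℂ) : EE n → ℂ := fun x => fderiv ℝ f x v

/-- The weight gradient component `(τ + λ xₙ)` as a complex-valued function. -/
def Wc (n : ℕ) (τ lam : ℝ) : EE n → ℂ := fun x => ((τ + lam * x (Fin.last n) : ℝ) : ℂ)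

/-- Basis vector. -/
def eV (n : ℕ) (i : Fin (n + 1)) : EE n := EuclideanSpace.single i 1

variable {n : ℕ} {τ lam : ℝ}

lemma smooth_plus_one {f : EE n → ℂ} (hf : ContDiff ℝ ∞ f) : ContDiff ℝ (∞ + 1) f := by
  simpa using hf

lemma contDiff_Dv {f : EE n → ℂ} (hf : ContDiff ℝ ∞ f) (v : EE n) :
    ContDiff ℝ ∞ (Dv n v f) := by
  have h1 : ContDiff ℝ ∞ (fderiv ℝ f) := (smooth_plus_one hf).fderiv_right le_rfl
  exact (ContinuousLinearMap.apply ℝ ℂ v).contDiff.comp h1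

lemma diff_of_smooth {f : EE n → ℂ} (hf : ContDiff ℝ ∞ f) : Differentiable ℝ f :=
  hf.differentiable (by simp)

lemma Dv_swap {f : EE n → ℂ} (hf : ContDiff ℝ ∞ f) (v w : EE n) :
    Dv n w (Dv n v f) = Dv n v (Dv n w f) := by
  funext x
  have hd : ∀ y, DifferentiableAt ℝ f y := fun y => diff_of_smooth hf y
  have h1 : ContDiff ℝ ∞ (fderiv ℝ f) := (smooth_plus_one hf).fderiv_right le_rfl
  have h2 : DifferentiableAt ℝ (fderiv ℝ f) x := (h1.differentiable (by simp)) x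
  have key : ∀ v w : EE n, fderiv ℝ (fderiv ℝ f) x v w = fderiv ℝ (fderiv ℝ f) x w v :=
    second_derivative_symmetric (fun y => (hd y).hasFDerivAt) h2.hasFDerivAt
  have expand : ∀ v w : EE n, Dv n w (Dv n v f) x = fderiv ℝ (fderiv ℝ f) x w v := by
    intro v w
    have : Dv n v f = fun y => (fderiv ℝ f y) v := rfl
    rw [Dv, this, fderiv_clm_apply h2 (differentiableAt_const v)]
    simp
  rw [expand, expand, key]

lemma Dv_add {f g : EE n → ℂ} (hf : Differentiable ℝ f) (hg : Differentiable ℝ g) (v : EE n) :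
    Dv n v (fun x => f x + g x) = fun x => Dv n v f x + Dv n v g x := by
  funext x; simp only [Dv]
  rw [fderiv_fun_add (hf x) (hg x)]; rfl

lemma Dv_sub {f g : EE n → ℂ} (hf : Differentiable ℝ f) (hg : Differentiable ℝ g) (v : EE n) :
    Dv n v (fun x => f x - g x) = fun x => Dv n v f x - Dv n v g x := by
  funext x; simp only [Dv]
  rw [fderiv_fun_sub (hf x) (hg x)]; rfl

lemma Dv_mul {f g : EE n → ℂ} (hf : Differentiable ℝ f) (hg : Differentiable ℝ g) (v : EE n) :
    Dv n v (fun x => f x * g x) = fun x => Dv n v f x * g x + f x * Dv n v g x := by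
  funext x; simp only [Dv]
  rw [fderiv_fun_mul (hf x) (hg x)]
  simp only [ContinuousLinearMap.add_apply, ContinuousLinearMap.smul_apply, smul_eq_mul]
  ring

lemma Dv_const_mul {f : EE n → ℂ} (hf : Differentiable ℝ f) (c : ℂ) (v : EE n) :
    Dv n v (fun x => c * f x) = fun x => c * Dv n v f x := by
  funext x; simp only [Dv]
  rw [fderiv_const_mul (hf x)]; rfl

lemma Dv_sum {ι : Type*} (s : Finset ι) {f : ι → EE n → ℂ}
    (hf : ∀ i ∈ s, Differentiable ℝ (f i)) (v : EE n) :
    Dv n v (fun x => ∑ i ∈ s, f i x) = fun x => ∑ i ∈ s, Dv n v (f i) x := by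
  funext x; simp only [Dv]
  rw [fderiv_fun_sum (fun i hi => hf i hi x)]; simp

lemma Wc_contDiff : ContDiff ℝ ∞ (Wc n τ lam) := by
  apply Complex.ofRealCLM.contDiff.comp
  exact contDiff_const.add (contDiff_const.mul (EuclideanSpace.proj (Fin.last n) : EE n →L[ℝ] ℝ).contDiff)

lemma Dv_Wc (v : EE n) :
    Dv n v (Wc n τ lam) = fun _ => ((lam * v (Fin.last n) : ℝ) : ℂ) := by
  funext x
  set N := Fin.last n
  have hp : HasFDerivAt (fun y : EE n => τ + lam * y N)
      (lam • (EuclideanSpace.proj N : EE n →L[ℝ] ℝ)) x := by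
    simpa using (hasFDerivAt_const τ x).fun_add
      ((EuclideanSpace.proj N : EE n →L[ℝ] ℝ).hasFDerivAt.const_mul lam)
  have h : HasFDerivAt (Wc n τ lam)
      (Complex.ofRealCLM.comp (lam • (EuclideanSpace.proj N : EE n →L[ℝ] ℝ))) x :=
    Complex.ofRealCLM.hasFDerivAt.comp x hp
  simp only [Dv, h.fderiv]
  simp [EuclideanSpace.proj]

lemma phiW_fderiv (x v : EE n) :
    fderiv ℝ (phiW n τ lam) x v = (τ + lam * x (Fin.last n)) * v (Fin.last n) := by
  set N := Fin.last n
  have hp : HasFDerivAt (fun y : EE n => y N) (EuclideanSpace.proj N : EE n →L[ℝ] ℝ) x :=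
    (EuclideanSpace.proj N : EE n →L[ℝ] ℝ).hasFDerivAt
  have hrw : phiW n τ lam = fun y : EE n => τ * y N + (lam / 2) * (y N * y N) := by
    funext y; simp [phiW]; ring
  have h : HasFDerivAt (phiW n τ lam)
      ((τ + lam * x N) • (EuclideanSpace.proj N : EE n →L[ℝ] ℝ)) x := by
    rw [hrw]
    have h1 := (hp.const_mul τ).fun_add ((hp.fun_mul hp).const_mul (lam / 2))
    refine h1.congr_fderiv ?_
    ext v
    simp [EuclideanSpace.proj]
    ring
  rw [h.fderiv]
  simp [EuclideanSpace.proj]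

lemma single_last (i : Fin (n + 1)) :
    (EuclideanSpace.single i (1 : ℝ)) (Fin.last n) = if i = Fin.last n then 1 else 0 := by
  rw [EuclideanSpace.single_apply]
  simp [eq_comm]

lemma phi_d (x : EE n) (i : Fin (n + 1)) :
    fderiv ℝ (phiW n τ lam) x (EuclideanSpace.single i 1) =
      if i = Fin.last n then τ + lam * x (Fin.last n) else 0 := by
  rw [phiW_fderiv, single_last]
  split <;> simp

/-- First key reduction: `B u = -2 W ∂ₙ u - λ u`. -/
lemma opB_eq {u : EE n → ℂ} (hu : ContDiff ℝ ∞ u) :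
    opB n τ lam u = fun x =>
      (-2 : ℂ) * (Wc n τ lam x * Dv n (eV n (Fin.last n)) u x) - (lam : ℂ) * u x := by
  funext x
  set N := Fin.last n
  have hsum1 : (∑ i, ((fderiv ℝ (phiW n τ lam) x (EuclideanSpace.single i 1) : ℝ) : ℂ) *
      fderiv ℝ u x (EuclideanSpace.single i 1)) =
      Wc n τ lam x * Dv n (eV n N) u x := by
    rw [Finset.sum_eq_single N]
    · rw [phi_d]; simp [Wc, Dv, eV, N]
    · intro i _ hiN
      rw [phi_d]; simp [show i ≠ Fin.last n from hiN]
    · simp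
  have hsum2 : (∑ i, fderiv ℝ (fun y =>
      ((fderiv ℝ (phiW n τ lam) y (EuclideanSpace.single i 1) : ℝ) : ℂ) * u y) x
      (EuclideanSpace.single i 1)) =
      Wc n τ lam x * Dv n (eV n N) u x + (lam : ℂ) * u x := by
    rw [Finset.sum_eq_single N]
    · have hfun : (fun y => ((fderiv ℝ (phiW n τ lam) y (EuclideanSpace.single N 1) : ℝ) : ℂ) * u y)
          = fun y => Wc n τ lam y * u y := by
        funext y
        rw [phi_d]
        simp [Wc, N]
      rw [hfun]
      have := congrFun (Dv_mul (f := Wc n τ lam) (g := u)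
        (diff_of_smooth Wc_contDiff) (diff_of_smooth hu) (eV n N)) x
      simp only [Dv] at this ⊢
      rw [show (EuclideanSpace.single N (1:ℝ)) = eV n N from rfl, this]
      have hW := congrFun (Dv_Wc (n := n) (τ := τ) (lam := lam) (eV n N)) x
      simp only [Dv] at hW
      rw [hW]
      have : (eV n N) N = 1 := by simp [eV, single_last]
      rw [this]
      push_cast
      ring
    · intro i _ hiN
      have hfun : (fun y => ((fderiv ℝ (phiW n τ lam) y (EuclideanSpace.single i 1) : ℝ) : ℂ) * u y)
          = fun _ => (0 : ℂ) := by
        funext y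
        rw [phi_d]
        simp [show i ≠ Fin.last n from hiN]
      rw [hfun, fderiv_fun_const]
      simp
    · simp
  rw [opB, hsum1, hsum2]
  ring

/-- Second key reduction: `A u = Δu + W² u`. -/
lemma opA_eq (u : EE n → ℂ) :
    opA n τ lam u = fun x => lapl n u x + (Wc n τ lam x) ^ 2 * u x := by
  funext x
  have hsum : (∑ i, (fderiv ℝ (phiW n τ lam) x (EuclideanSpace.single i 1)) ^ 2 : ℝ) =
      (τ + lam * x (Fin.last n)) ^ 2 := by
    rw [Finset.sum_eq_single (Fin.last n)]
    · rw [phi_d]; simp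
    · intro i _ hiN
      rw [phi_d]; simp [show i ≠ Fin.last n from hiN]
    · simp
  rw [opA, hsum]
  simp only [Wc]
  push_cast
  ring

lemma lapl_eq (u : EE n → ℂ) :
    lapl n u = fun x => ∑ i, Dv n (eV n i) (Dv n (eV n i) u) x := rfl

lemma lapl_apply (u : EE n → ℂ) (x : EE n) :
    lapl n u x = ∑ i, Dv n (eV n i) (Dv n (eV n i) u) x := rfl

lemma lapl_contDiff {u : EE n → ℂ} (hu : ContDiff ℝ ∞ u) : ContDiff ℝ ∞ (lapl n u) := by
  rw [lapl_eq]
  exact ContDiff.sum fun i _ => contDiff_Dv (contDiff_Dv hu _) _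

lemma lapl_sub {f g : EE n → ℂ} (hf : ContDiff ℝ ∞ f) (hg : ContDiff ℝ ∞ g) :
    lapl n (fun x => f x - g x) = fun x => lapl n f x - lapl n g x := by
  funext x
  rw [lapl_apply, lapl_apply, lapl_apply]
  rw [← Finset.sum_sub_distrib]
  apply Finset.sum_congr rfl
  intro i _
  rw [Dv_sub (diff_of_smooth hf) (diff_of_smooth hg),
      Dv_sub (diff_of_smooth (contDiff_Dv hf _)) (diff_of_smooth (contDiff_Dv hg _))]

lemma lapl_const_mul {f : EE n → ℂ} (hf : ContDiff ℝ ∞ f) (c : ℂ) :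
    lapl n (fun x => c * f x) = fun x => c * lapl n f x := by
  funext x
  rw [lapl_apply, lapl_apply]
  rw [Finset.mul_sum]
  apply Finset.sum_congr rfl
  intro i _
  rw [Dv_const_mul (diff_of_smooth hf), Dv_const_mul (diff_of_smooth (contDiff_Dv hf _))]

/-- Laplacian of `W f`. -/
lemma lapl_W_mul {f : EE n → ℂ} (hf : ContDiff ℝ ∞ f) :
    lapl n (fun x => Wc n τ lam x * f x) = fun x =>
      Wc n τ lam x * lapl n f x + (2 * lam : ℂ) * Dv n (eV n (Fin.last n)) f x := by
  funext x
  set N := Fin.last n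
  rw [lapl_apply]
  have step : ∀ i : Fin (n + 1), Dv n (eV n i) (Dv n (eV n i) (fun x => Wc n τ lam x * f x)) x =
      2 * ((lam * (eV n i) N : ℝ) : ℂ) * Dv n (eV n i) f x +
        Wc n τ lam x * Dv n (eV n i) (Dv n (eV n i) f) x := by
    intro i
    set c : ℂ := ((lam * (eV n i) N : ℝ) : ℂ) with hc
    have h1 : Dv n (eV n i) (fun x => Wc n τ lam x * f x) =
        fun x => c * f x + Wc n τ lam x * Dv n (eV n i) f x := by
      rw [Dv_mul (diff_of_smooth Wc_contDiff) (diff_of_smooth hf), Dv_Wc]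
    rw [h1]
    have h2 : Dv n (eV n i) (fun x => c * f x + Wc n τ lam x * Dv n (eV n i) f x) =
        fun x => c * Dv n (eV n i) f x +
          (c * Dv n (eV n i) f x + Wc n τ lam x * Dv n (eV n i) (Dv n (eV n i) f) x) := by
      rw [Dv_add ((diff_of_smooth hf).const_mul c)
            ((diff_of_smooth Wc_contDiff).fun_mul (diff_of_smooth (contDiff_Dv hf _))),
          Dv_const_mul (diff_of_smooth hf),
          Dv_mul (diff_of_smooth Wc_contDiff) (diff_of_smooth (contDiff_Dv hf _)), Dv_Wc]
    rw [h2]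
    ring
  rw [Finset.sum_congr rfl (fun i _ => step i)]
  rw [Finset.sum_add_distrib]
  have hA : (∑ i : Fin (n + 1), 2 * ((lam * (eV n i) N : ℝ) : ℂ) * Dv n (eV n i) f x) =
      (2 * lam : ℂ) * Dv n (eV n N) f x := by
    rw [Finset.sum_eq_single N]
    · have : (eV n N) N = 1 := by simp [eV, single_last]
      rw [this]; push_cast; ring
    · intro i _ hiN
      have : (eV n i) N = 0 := by
        rw [show (eV n i : EE n) = EuclideanSpace.single i (1:ℝ) from rfl, single_last]
        simp [show i ≠ Fin.last n from hiN]
      rw [this]; simp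
    · simp
  have hB : (∑ i : Fin (n + 1), Wc n τ lam x * Dv n (eV n i) (Dv n (eV n i) f) x) =
      Wc n τ lam x * lapl n f x := by
    rw [← Finset.mul_sum, lapl_apply]
  rw [hA, hB]
  ring

/-- Commutation of the Laplacian with `∂ₙ`. -/
lemma lapl_Dv_comm {u : EE n → ℂ} (hu : ContDiff ℝ ∞ u) (v : EE n) :
    lapl n (Dv n v u) = Dv n v (lapl n u) := by
  have step : ∀ i : Fin (n + 1),
      Dv n (eV n i) (Dv n (eV n i) (Dv n v u)) = Dv n v (Dv n (eV n i) (Dv n (eV n i) u)) := by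
    intro i
    rw [Dv_swap hu v (eV n i), Dv_swap (contDiff_Dv hu (eV n i)) v (eV n i)]
  have h2 := Dv_sum (n := n) Finset.univ (f := fun i => Dv n (eV n i) (Dv n (eV n i) u))
    (fun i _ => diff_of_smooth (contDiff_Dv (contDiff_Dv hu _) _)) v
  funext x
  have h1 : lapl n (Dv n v u) x = ∑ i, Dv n (eV n i) (Dv n (eV n i) (Dv n v u)) x := rfl
  have h3 : Dv n v (lapl n u) x = ∑ i, Dv n v (Dv n (eV n i) (Dv n (eV n i) u)) x := by
    have hl : lapl n u = fun x => ∑ i, Dv n (eV n i) (Dv n (eV n i) u) x := rfl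
    rw [hl, h2]
  rw [h1, h3]
  exact Finset.sum_congr rfl (fun i _ => congrFun (step i) x)

end Statement5Aux

open Statement5Aux

/-- Commutator identity: `[A,B] g = -4λ ∂ₙ² g + 4λ (τ + λ xₙ)² g`. -/
theorem statement5 (n : ℕ) (τ lam : ℝ) (hτ : 0 < τ) (hlam : 0 < lam)
    (g : SchwartzMap (EuclideanSpace ℝ (Fin (n + 1))) ℂ)
    (x : EuclideanSpace ℝ (Fin (n + 1))) :
    opA n τ lam (opB n τ lam (⇑g)) x - opB n τ lam (opA n τ lam (⇑g)) x =
      -(4 * lam : ℝ) *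
          fderiv ℝ (fun y => fderiv ℝ (⇑g) y (EuclideanSpace.single (Fin.last n) 1)) x
            (EuclideanSpace.single (Fin.last n) 1) +
        (4 * lam : ℝ) * ((τ + lam * x (Fin.last n) : ℝ) : ℂ) ^ 2 * g x := by
  set N := Fin.last n
  set u : EE n → ℂ := ⇑g with hu_def
  have hu : ContDiff ℝ ∞ u := g.smooth ⊤
  set W : EE n → ℂ := Wc n τ lam with hW_def
  set e : EE n := eV n N with he_def
  have hWs : ContDiff ℝ ∞ W := Wc_contDiff
  have hPu : ContDiff ℝ ∞ (Dv n e u) := contDiff_Dv hu e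
  -- B u = -2 (W ∂u) - λ u
  have hBu : opB n τ lam u = fun x => (-2 : ℂ) * (W x * Dv n e u x) - (lam : ℂ) * u x :=
    opB_eq hu
  have hBu_smooth : ContDiff ℝ ∞ (fun x => (-2 : ℂ) * (W x * Dv n e u x) - (lam : ℂ) * u x) :=
    (contDiff_const.mul (hWs.mul hPu)).sub (contDiff_const.mul hu)
  -- A u = Δ u + W² u
  have hAu : opA n τ lam u = fun x => lapl n u x + (W x) ^ 2 * u x := opA_eq u
  have hlapl : ContDiff ℝ ∞ (lapl n u) := lapl_contDiff hu
  have hAu_smooth : ContDiff ℝ ∞ (fun x => lapl n u x + (W x) ^ 2 * u x) :=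
    hlapl.add ((hWs.pow 2).mul hu)
  -- Compute A (B u) at x
  have hABu : opA n τ lam (opB n τ lam u) x =
      (-4 * lam : ℂ) * Dv n e (Dv n e u) x +
        (-2 : ℂ) * (W x * Dv n e (lapl n u) x) - (lam : ℂ) * lapl n u x +
        (W x) ^ 2 * ((-2 : ℂ) * (W x * Dv n e u x) - (lam : ℂ) * u x) := by
    rw [hBu, opA_eq]
    have hl1 : lapl n (fun x => (-2 : ℂ) * (W x * Dv n e u x) - (lam : ℂ) * u x) =
        fun x => lapl n (fun x => (-2 : ℂ) * (W x * Dv n e u x)) x -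
          lapl n (fun x => (lam : ℂ) * u x) x :=
      lapl_sub (contDiff_const.mul (hWs.mul hPu)) (contDiff_const.mul hu)
    have hl2 : lapl n (fun x => (-2 : ℂ) * (W x * Dv n e u x)) =
        fun x => (-2 : ℂ) * lapl n (fun x => W x * Dv n e u x) x :=
      lapl_const_mul (hWs.mul hPu) _
    have hl3 : lapl n (fun x => W x * Dv n e u x) =
        fun x => W x * lapl n (Dv n e u) x + (2 * lam : ℂ) * Dv n e (Dv n e u) x :=
      lapl_W_mul hPu
    have hl4 : lapl n (Dv n e u) = Dv n e (lapl n u) := lapl_Dv_comm hu e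
    have hl5 : lapl n (fun x => (lam : ℂ) * u x) = fun x => (lam : ℂ) * lapl n u x :=
      lapl_const_mul hu _
    rw [hl1, hl2, hl3, hl4, hl5]
    beta_reduce
    ring
  -- Compute B (A u) at x
  have hBAu : opB n τ lam (opA n τ lam u) x =
      (-2 : ℂ) * (W x * (Dv n e (lapl n u) x +
        ((2 * lam : ℂ) * W x * u x + (W x) ^ 2 * Dv n e u x))) -
        (lam : ℂ) * (lapl n u x + (W x) ^ 2 * u x) := by
    rw [hAu, opB_eq hAu_smooth]
    have hd1 : Dv n e (fun x => lapl n u x + (W x) ^ 2 * u x) =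
        fun x => Dv n e (lapl n u) x + Dv n e (fun x => (W x) ^ 2 * u x) x :=
      Dv_add (diff_of_smooth hlapl) (diff_of_smooth ((hWs.pow 2).mul hu)) e
    have hsq : (fun x => (W x) ^ 2 * u x) = fun x => W x * (W x * u x) := by
      funext y; ring
    have hd2 : Dv n e (fun x => W x * (W x * u x)) =
        fun x => (lam : ℂ) * (W x * u x) + W x * ((lam : ℂ) * u x + W x * Dv n e u x) := by
      rw [Dv_mul (diff_of_smooth hWs) ((diff_of_smooth hWs).fun_mul (diff_of_smooth hu)),
          Dv_mul (diff_of_smooth hWs) (diff_of_smooth hu), Dv_Wc]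
      have : (e : EE n) N = 1 := by simp [he_def, eV, single_last]
      rw [this]
      funext y
      push_cast
      ring
    rw [hd1, hsq, hd2]
    beta_reduce
    ring
  rw [hABu, hBAu]
  have hgoal1 : fderiv ℝ (fun y => fderiv ℝ (⇑g) y (EuclideanSpace.single N 1)) x
      (EuclideanSpace.single N 1) = Dv n e (Dv n e u) x := rfl
  rw [hgoal1]
  have hgoal2 : ((τ + lam * x N : ℝ) : ℂ) = W x := rfl
  rw [hgoal2]
  push_cast
  ring

end
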